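/- If u is absolutely continuous on [a,b] ⊆ [0,T] and |u(t) - w(a)| < ρ for all t ∈ [a,b] (where w = 𝒫[u,w₀] is the play output), then w is constant on [a,b], i.e. w(t) = w(a) for all t ∈ [a,b]. -/

import Mathlib

open MeasureTheory Set Filter

/-- `f` is absolutely continuous on `[0,T]`: it is the integral of an integrable function. -/
def AbsContOn (T : ℝ) (f : ℝ → ℝ) : Prop :=
  ∃ f' : ℝ → ℝ, MeasureTheory.IntegrableOn f' (Set.Icc 0 T) ∧
    ∀ t ∈ Set.Icc (0:ℝ) T, f t = f 0 + ∫ s in Set.Ioc (0:ℝ) t, f' s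

/-- `w` is the output of the scalar play operator with parameter `ρ` on `[0,T]`,
applied to the input `u` with initial state `w₀`, characterized by the
variational inequality: `w` is absolutely continuous, `w 0 = w₀`,
`|u - w| ≤ ρ` on `[0,T]`, and `w' (u - w - v) ≥ 0` a.e. for all `|v| ≤ ρ`. -/
def IsPlayOutput (ρ T : ℝ) (u : ℝ → ℝ) (w₀ : ℝ) (w : ℝ → ℝ) : Prop :=
  w 0 = w₀ ∧
  ∃ w' : ℝ → ℝ, MeasureTheory.IntegrableOn w' (Set.Icc 0 T) ∧
    (∀ t ∈ Set.Icc (0:ℝ) T, w t = w₀ + ∫ s in Set.Ioc (0:ℝ) t, w' s) ∧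
    (∀ t ∈ Set.Icc (0:ℝ) T, |u t - w t| ≤ ρ) ∧
    (∀ᵐ t ∂(MeasureTheory.volume.restrict (Set.Icc (0:ℝ) T)),
      ∀ v : ℝ, |v| ≤ ρ → 0 ≤ w' t * (u t - w t - v))


/-- Fubini symmetrization: the square of an integral over `Ioc a t` equals twice the
integral over the lower-triangular region. -/
lemma sq_integral_eq_two_mul (f : ℝ → ℝ) (a t : ℝ)
    (hf : MeasureTheory.IntegrableOn f (Set.Ioc a t)) :
    (∫ x in Set.Ioc a t, f x) ^ 2
      = 2 * ∫ x in Set.Ioc a t, f x * ∫ y in Set.Ioc a x, f y := by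
  set μ := volume.restrict (Set.Ioc a t) with hμdef
  have hfi : Integrable f μ := hf
  have h1 : Integrable (fun p : ℝ × ℝ => f p.1 * f p.2) (μ.prod μ) := hfi.mul_prod hfi
  set A : Set (ℝ × ℝ) := {p : ℝ × ℝ | p.2 ≤ p.1} with hAdef
  have hA : MeasurableSet A := measurableSet_le measurable_snd measurable_fst
  -- diagonal is null
  have hdiag : (μ.prod μ) {p : ℝ × ℝ | p.1 = p.2} = 0 := by
    have hm : MeasurableSet {p : ℝ × ℝ | p.1 = p.2} :=
      measurableSet_eq_fun measurable_fst measurable_snd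
    rw [Measure.prod_apply hm]
    have h0 : ∀ x : ℝ, μ (Prod.mk x ⁻¹' {p : ℝ × ℝ | p.1 = p.2}) = 0 := by
      intro x
      have hpre : Prod.mk x ⁻¹' {p : ℝ × ℝ | p.1 = p.2} = {x} := by
        ext y; simp [eq_comm]
      rw [hpre]
      refine le_antisymm ?_ zero_le
      calc μ {x} ≤ volume {x} := Measure.restrict_apply_le _ _
        _ = 0 := Real.volume_singleton
    simp [h0]
  -- A is a.e. equal to the strict version
  have haeq : A =ᶠ[ae (μ.prod μ)] {p : ℝ × ℝ | p.2 < p.1} := by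
    rw [MeasureTheory.ae_eq_set]
    constructor
    · refine measure_mono_null ?_ hdiag
      intro p hp
      simp only [A, mem_diff, mem_setOf_eq, not_lt] at hp ⊢
      exact le_antisymm hp.2 hp.1
    · refine measure_mono_null ?_ hdiag
      intro p hp
      simp only [A, mem_diff, mem_setOf_eq] at hp
      exact (hp.2 hp.1.le).elim
  -- swap symmetry
  have hswap : ∫ p in Aᶜ, f p.1 * f p.2 ∂(μ.prod μ)
      = ∫ p in {p : ℝ × ℝ | p.2 < p.1}, f p.1 * f p.2 ∂(μ.prod μ) := by
    have hmp : MeasurePreserving Prod.swap (μ.prod μ) (μ.prod μ) :=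
      Measure.measurePreserving_swap
    have hemb : MeasurableEmbedding (Prod.swap : ℝ × ℝ → ℝ × ℝ) :=
      (MeasurableEquiv.prodComm (α := ℝ) (β := ℝ)).measurableEmbedding
    have := hmp.setIntegral_preimage_emb hemb (fun p : ℝ × ℝ => f p.1 * f p.2)
      {p : ℝ × ℝ | p.2 < p.1}
    rw [← this]
    have hpre : Prod.swap ⁻¹' {p : ℝ × ℝ | p.2 < p.1} = Aᶜ := by
      ext p; simp [A, not_le]
    rw [hpre]
    refine setIntegral_congr_fun (hA.compl) ?_
    intro p _; simp [mul_comm]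
  -- Fubini on A
  have hkey : ∫ p in A, f p.1 * f p.2 ∂(μ.prod μ)
      = ∫ x, f x * ∫ y in Set.Iic x, f y ∂μ ∂μ := by
    rw [← integral_indicator hA, integral_prod _ (h1.indicator hA)]
    refine integral_congr_ae (Eventually.of_forall fun x => ?_)
    have hfun : ∀ y : ℝ, A.indicator (fun p : ℝ × ℝ => f p.1 * f p.2) (x, y)
        = (Set.Iic x).indicator (fun y => f x * f y) y := by
      intro y; by_cases h : y ≤ x <;> simp [A, Set.indicator, h]
    simp only [hfun]
    rw [integral_indicator measurableSet_Iic, ← integral_const_mul]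
  -- put together
  have htotal := integral_add_compl hA h1
  have hsq : ∫ p : ℝ × ℝ, f p.1 * f p.2 ∂(μ.prod μ) = (∫ x, f x ∂μ) ^ 2 := by
    rw [integral_prod_mul]; ring
  have hAeq : ∫ p in Aᶜ, f p.1 * f p.2 ∂(μ.prod μ) = ∫ p in A, f p.1 * f p.2 ∂(μ.prod μ) := by
    rw [hswap, setIntegral_congr_set haeq]
  have hmain : (∫ x, f x ∂μ) ^ 2 = 2 * ∫ x, f x * ∫ y in Set.Iic x, f y ∂μ ∂μ := by
    rw [← hsq, ← htotal, hAeq, hkey]; ring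
  -- rewrite inner integral
  have hinner : ∫ x, f x * ∫ y in Set.Iic x, f y ∂μ ∂μ
      = ∫ x in Set.Ioc a t, f x * ∫ y in Set.Ioc a x, f y := by
    rw [hμdef]
    refine setIntegral_congr_fun measurableSet_Ioc ?_
    intro x hx
    show f x * ∫ y in Set.Iic x, f y ∂(volume.restrict (Set.Ioc a t))
        = f x * ∫ y in Set.Ioc a x, f y
    have hset : Set.Iic x ∩ Set.Ioc a t = Set.Ioc a x := by
      ext y
      simp only [mem_inter_iff, mem_Iic, mem_Ioc]
      constructor
      · rintro ⟨h1, h2, _⟩; exact ⟨h2, h1⟩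
      · rintro ⟨h1, h2⟩; exact ⟨h2, h1, h2.trans hx.2⟩
    rw [Measure.restrict_restrict measurableSet_Iic, hset]
  rw [hmain, hinner]

theorem play_constant_inside (ρ T : ℝ) (hρ : 0 < ρ) (hT : 0 ≤ T)
    (u : ℝ → ℝ) (hu : AbsContOn T u) (w₀ : ℝ) (hw₀ : |w₀ - u 0| ≤ ρ)
    (w : ℝ → ℝ) (hw : IsPlayOutput ρ T u w₀ w)
    (a b : ℝ) (ha : 0 ≤ a) (hab : a ≤ b) (hbT : b ≤ T)
    (hinside : ∀ t ∈ Set.Icc a b, |u t - w a| < ρ) :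
    ∀ t ∈ Set.Icc a b, w t = w a := by
  obtain ⟨hw0, w', hw'int, hwrep, hdist, hvar⟩ := hw
  -- w t - w a = ∫_{(a,t]} w'
  have hsub : ∀ t ∈ Set.Icc a b, w t - w a = ∫ s in Set.Ioc a t, w' s := by
    intro t ht
    have htIcc : t ∈ Set.Icc (0:ℝ) T := ⟨ha.trans ht.1, ht.2.trans hbT⟩
    have haIcc : a ∈ Set.Icc (0:ℝ) T := ⟨ha, (hab.trans hbT)⟩
    rw [hwrep t htIcc, hwrep a haIcc]
    have hsplit : ∫ s in Set.Ioc (0:ℝ) t, w' s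
        = (∫ s in Set.Ioc (0:ℝ) a, w' s) + ∫ s in Set.Ioc a t, w' s := by
      rw [← MeasureTheory.setIntegral_union]
      · rw [Set.Ioc_union_Ioc_eq_Ioc ha ht.1]
      · exact Set.Ioc_disjoint_Ioc_of_le le_rfl
      · exact measurableSet_Ioc
      · exact hw'int.mono_set (fun s hs => ⟨le_of_lt hs.1, hs.2.trans haIcc.2⟩)
      · exact hw'int.mono_set (fun s hs => ⟨ha.trans (le_of_lt hs.1), hs.2.trans htIcc.2⟩)
    rw [hsplit]; ring
  intro t ht
  have hIocsub : Set.Ioc a t ⊆ Set.Icc (0:ℝ) T := fun s hs =>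
    ⟨ha.trans (le_of_lt hs.1), (hs.2.trans ht.2).trans hbT⟩
  have hfI : MeasureTheory.IntegrableOn w' (Set.Ioc a t) := hw'int.mono_set hIocsub
  have hsq := sq_integral_eq_two_mul w' a t hfI
  -- rewrite the inner integral as w x - w a
  have hrw : ∫ x in Set.Ioc a t, w' x * ∫ y in Set.Ioc a x, w' y
      = ∫ x in Set.Ioc a t, w' x * (w x - w a) := by
    refine setIntegral_congr_fun measurableSet_Ioc ?_
    intro x hx
    show w' x * ∫ y in Set.Ioc a x, w' y = w' x * (w x - w a)
    rw [← hsub x ⟨le_of_lt hx.1, hx.2.trans ht.2⟩]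
  -- a.e. nonpositivity
  have hae : ∀ᵐ x ∂(volume.restrict (Set.Ioc a t)), w' x * (w x - w a) ≤ 0 := by
    have hvar' : ∀ᵐ x ∂(volume.restrict (Set.Ioc a t)),
        ∀ v : ℝ, |v| ≤ ρ → 0 ≤ w' x * (u x - w x - v) :=
      ae_mono (Measure.restrict_mono hIocsub le_rfl) hvar
    filter_upwards [hvar', ae_restrict_mem measurableSet_Ioc] with x hx hxmem
    have hxab : x ∈ Set.Icc a b := ⟨le_of_lt hxmem.1, hxmem.2.trans ht.2⟩
    have hv : |u x - w a| ≤ ρ := le_of_lt (hinside x hxab)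
    have := hx (u x - w a) hv
    nlinarith [this]
  have hnonpos : ∫ x in Set.Ioc a t, w' x * (w x - w a) ≤ 0 :=
    integral_nonpos_of_ae hae
  have hfinal : (∫ x in Set.Ioc a t, w' x) ^ 2 ≤ 0 := by
    rw [hsq, hrw]; linarith
  have hzero : (∫ x in Set.Ioc a t, w' x) = 0 := by
    nlinarith [sq_nonneg (∫ x in Set.Ioc a t, w' x)]
  have := hsub t ht
  rw [hzero] at this
  linarith
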